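/- Let $\vec{P}=(p_1,p_2)$ with $1<p_1,p_2<\infty$, $1/p=1/p_1+1/p_2$ and $1<p<\infty$, let $\vec{w}=(w_1,w_2)\in A_{\vec{P}}$, let $\mathscr{D}$ be a dyadic cubes system in $\mathbb{R}^n$ and $\mathcal{S}\subset\mathscr{D}$ a sparse family. Suppose $\widetilde{Q}\in\mathscr{D}$ and $\operatorname{supp} f_2\subset\widetilde{Q}$. Then there is a constant $C$ depending only on $n$ and $\vec{P}$ such that $\Big\|\chi_{\widetilde{Q}}\sum_{Q\in\mathcal{S},\ \widetilde{Q}\subset Q}\langle\sigma_1\chi_{\widetilde{Q}}\rangle_Q\,\langle|f_2|\sigma_2\rangle_Q\,\chi_Q\Big\|_{L^p(v_{\vec{w}})}\ \le\ C\,[\vec{w}]_{A_{\vec{P}}}^{1/p}\,\|f_2\|_{L^{p_2}(\sigma_2)}\,\sigma_1(\widetilde{Q})^{1/p_1}$. -/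

import Mathlib

open MeasureTheory Set ENNReal

noncomputable section

/-- Euclidean space `ℝⁿ`. -/
abbrev Rn (n : ℕ) := Fin n → ℝ

/-- `Q` is an axis-parallel (half-open) cube of sidelength `h`. -/
def HasSide {n : ℕ} (Q : Set (Rn n)) (h : ℝ) : Prop :=
  ∃ c : Rn n, Q = {x | ∀ i, c i ≤ x i ∧ x i < c i + h}

/-- `Q` is an axis-parallel cube (with positive sidelength). -/
def IsCube {n : ℕ} (Q : Set (Rn n)) : Prop :=
  ∃ h : ℝ, 0 < h ∧ HasSide Q h

/-- A dyadic cubes system: cubes of sidelengths `2^k`, pairwise nested or disjoint,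
and for each fixed `k` the cubes of sidelength `2^k` cover (hence partition) `ℝⁿ`. -/
def IsDyadicSystem {n : ℕ} (D : Set (Set (Rn n))) : Prop :=
  (∀ Q ∈ D, ∃ k : ℤ, HasSide Q ((2 : ℝ) ^ k)) ∧
  (∀ Q ∈ D, ∀ R ∈ D, Q ∩ R = Q ∨ Q ∩ R = R ∨ Q ∩ R = ∅) ∧
  (∀ k : ℤ, ∀ x : Rn n, ∃ Q ∈ D, HasSide Q ((2 : ℝ) ^ k) ∧ x ∈ Q)

/-- A sparse family: each `Q` carries a measurable subset `E Q ⊆ Q` with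
`|E Q| ≥ |Q|/2`, the sets `E Q` being pairwise disjoint. -/
def IsSparse {n : ℕ} (S : Set (Set (Rn n))) : Prop :=
  ∃ E : Set (Rn n) → Set (Rn n),
    (∀ Q ∈ S, E Q ⊆ Q ∧ MeasurableSet (E Q) ∧ volume Q ≤ 2 * volume (E Q)) ∧
    S.Pairwise fun Q R => Disjoint (E Q) (E R)

/-- A weight: a measurable nonnegative (`ℝ≥0∞`-valued) locally integrable function. -/
def IsWeight {n : ℕ} (w : Rn n → ℝ≥0∞) : Prop :=
  Measurable w ∧ ∀ Q : Set (Rn n), IsCube Q → (∫⁻ x in Q, w x) ≠ ∞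

/-- `w(Q) = ∫_Q w`. -/
def mass {n : ℕ} (w : Rn n → ℝ≥0∞) (Q : Set (Rn n)) : ℝ≥0∞ := ∫⁻ x in Q, w x

/-- `⟨w⟩_Q = w(Q)/|Q|`. -/
def avg {n : ℕ} (w : Rn n → ℝ≥0∞) (Q : Set (Rn n)) : ℝ≥0∞ := mass w Q / volume Q

/-- The conjugate exponent `q' = q/(q-1)`. -/
def conj (q : ℝ) : ℝ := q / (q - 1)

/-- The product weight `v_w = w₁^{p/p₁} w₂^{p/p₂}`. -/
def vweight {n : ℕ} (p p1 p2 : ℝ) (w1 w2 : Rn n → ℝ≥0∞) : Rn n → ℝ≥0∞ :=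
  fun x => w1 x ^ (p / p1) * w2 x ^ (p / p2)

/-- The dual weight `σ = w^{1-q'}`. -/
def dualW {n : ℕ} (q : ℝ) (w : Rn n → ℝ≥0∞) : Rn n → ℝ≥0∞ :=
  fun x => w x ^ (1 - conj q)

/-- The multilinear `A_{\vec P}` constant
`[\vec w]_{A_{\vec P}} = sup_Q ⟨v_w⟩_Q ⟨σ₁⟩_Q^{p/p₁'} ⟨σ₂⟩_Q^{p/p₂'}`. -/
def APconst {n : ℕ} (p p1 p2 : ℝ) (w1 w2 : Rn n → ℝ≥0∞) : ℝ≥0∞ :=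
  ⨆ (Q : Set (Rn n)) (_ : IsCube Q),
    avg (vweight p p1 p2 w1 w2) Q * avg (dualW p1 w1) Q ^ (p / conj p1) *
      avg (dualW p2 w2) Q ^ (p / conj p2)

/-- The (linear) `A_q` constant `[w]_{A_q} = sup_Q ⟨w⟩_Q ⟨w^{1-q'}⟩_Q^{q-1}`. -/
def AqConst {n : ℕ} (q : ℝ) (w : Rn n → ℝ≥0∞) : ℝ≥0∞ :=
  ⨆ (Q : Set (Rn n)) (_ : IsCube Q),
    avg w Q * avg (fun x => w x ^ (1 - conj q)) Q ^ (q - 1)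

/-- The Hardy–Littlewood maximal operator (over axis-parallel cubes). -/
def HLMax {n : ℕ} (w : Rn n → ℝ≥0∞) (x : Rn n) : ℝ≥0∞ :=
  ⨆ (Q : Set (Rn n)) (_ : IsCube Q) (_ : x ∈ Q), avg w Q

/-- The Fujii–Wilson `A_∞` constant `[w]_{A_∞} = sup_Q w(Q)⁻¹ ∫_Q M(wχ_Q)`. -/
def AinfConst {n : ℕ} (w : Rn n → ℝ≥0∞) : ℝ≥0∞ :=
  ⨆ (Q : Set (Rn n)) (_ : IsCube Q), (∫⁻ x in Q, HLMax (Q.indicator w) x) / mass w Q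

/-- `‖g‖_{L^p(v)}` for an `ℝ≥0∞`-valued function. -/
def lpNorm {n : ℕ} (g : Rn n → ℝ≥0∞) (p : ℝ) (v : Rn n → ℝ≥0∞) : ℝ≥0∞ :=
  (∫⁻ x, g x ^ p * v x) ^ (1 / p)

/-- `‖g‖_{L^{p,∞}(v)} = sup_{t>0} t · v({g > t})^{1/p}`. -/
def wkNorm {n : ℕ} (g : Rn n → ℝ≥0∞) (p : ℝ) (v : Rn n → ℝ≥0∞) : ℝ≥0∞ :=
  ⨆ t : ℝ≥0∞, t * mass v {x | t < g x} ^ (1 / p)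

/-- The pointwise `ℝ≥0∞`-valued absolute value of a real function. -/
def eAbs {n : ℕ} (f : Rn n → ℝ) : Rn n → ℝ≥0∞ := fun x => (‖f x‖₊ : ℝ≥0∞)

/-- `f ∈ L^p(v)`. -/
def MemLpW {n : ℕ} (f : Rn n → ℝ) (p : ℝ) (v : Rn n → ℝ≥0∞) : Prop :=
  Measurable f ∧ lpNorm (eAbs f) p v ≠ ∞

/-- The bilinear sparse operator `A_{D,S}(g₁,g₂) = ∑_{Q∈S} ⟨g₁⟩_Q ⟨g₂⟩_Q χ_Q`. -/
def sparseOp {n : ℕ} (S : Set (Set (Rn n))) (g1 g2 : Rn n → ℝ≥0∞) (x : Rn n) : ℝ≥0∞ :=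
  ∑' Q : S, Set.indicator (Q : Set (Rn n)) (fun _ => avg g1 Q * avg g2 Q) x

/-- The weighted average `⟨f⟩_Q^w = (∫_Q |f| w)/w(Q)`. -/
def wAvg {n : ℕ} (f : Rn n → ℝ) (w : Rn n → ℝ≥0∞) (Q : Set (Rn n)) : ℝ≥0∞ :=
  (∫⁻ x in Q, (‖f x‖₊ : ℝ≥0∞) * w x) / mass w Q


/-- The exponent `β = 1/p + max{min{1/p₁', (1/p₁')(p₂'/p)}, min{1/p₂', (1/p₂')(p₁'/p)}}`. -/
def betaExp (p p1 p2 : ℝ) : ℝ :=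
  1 / p + max (min (1 / conj p1) (1 / conj p1 * (conj p2 / p)))
              (min (1 / conj p2) (1 / conj p2 * (conj p1 / p)))

/-- The exponent `γ = max{1, p₁'/p, p₂'/p}`. -/
def gammaExp (p p1 p2 : ℝ) : ℝ := max 1 (max (conj p1 / p) (conj p2 / p))

end


namespace Statement15Aux

open MeasureTheory Set ENNReal

/-- The box with corner `c` and sidelength `h`. -/
def box {n : ℕ} (c : Rn n) (h : ℝ) : Set (Rn n) :=
  {x | ∀ i, c i ≤ x i ∧ x i < c i + h}

lemma hasSide_iff {n : ℕ} {Q : Set (Rn n)} {h : ℝ} :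
    HasSide Q h ↔ ∃ c, Q = box c h := Iff.rfl

lemma box_eq_pi {n : ℕ} (c : Rn n) (h : ℝ) :
    box c h = Set.pi univ (fun i => Ico (c i) (c i + h)) := by
  ext x; simp [box, Set.mem_pi, Set.mem_Ico]

lemma measurableSet_box {n : ℕ} (c : Rn n) (h : ℝ) : MeasurableSet (box c h) := by
  rw [box_eq_pi]
  exact MeasurableSet.univ_pi (fun i => measurableSet_Ico)

lemma volume_box {n : ℕ} (c : Rn n) (h : ℝ) :
    volume (box c h) = ENNReal.ofReal h ^ n := by
  rw [box_eq_pi, volume_pi_pi]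
  simp [Real.volume_Ico]

lemma mem_box_self {n : ℕ} (c : Rn n) {h : ℝ} (hh : 0 < h) : c ∈ box c h :=
  fun i => ⟨le_refl _, by linarith⟩

lemma box_subset_eq {n : ℕ} {c c' : Rn n} {h : ℝ} (hh : 0 < h)
    (hsub : box c h ⊆ box c' h) : box c h = box c' h := by
  suffices hcc : c = c' by rw [hcc]
  funext i
  have hc : c ∈ box c' h := hsub (mem_box_self c hh)
  refine le_antisymm ?_ (hc i).1
  by_contra hlt
  push_neg at hlt
  -- c' i < c i; consider the point x with x i = c' i + h
  set x : Rn n := fun j => if j = i then c' i + h else c j with hx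
  have hxQ : x ∈ box c h := by
    intro j
    by_cases hj : j = i
    · subst hj
      simp only [hx, if_pos rfl]
      constructor
      · linarith [(hc j).2]
      · linarith
    · simp only [hx, if_neg hj]
      exact ⟨le_refl _, by linarith⟩
  have := (hsub hxQ i).2
  simp only [hx, if_pos rfl] at this
  linarith

lemma box_side_le {n : ℕ} (hn : 0 < n) {c c' : Rn n} {h h' : ℝ} (hh : 0 < h) (hh' : 0 < h')
    (hsub : box c h ⊆ box c' h') : h ≤ h' := by
  by_contra hlt
  push_neg at hlt
  set i : Fin n := ⟨0, hn⟩
  set x : Rn n := fun j => if j = i then c i + h' else c j with hx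
  have hxQ : x ∈ box c h := by
    intro j
    by_cases hj : j = i
    · subst hj
      simp only [hx, if_pos rfl]
      exact ⟨by linarith, by linarith⟩
    · simp only [hx, if_neg hj]
      exact ⟨le_refl _, by linarith⟩
  have hc : c ∈ box c' h' := hsub (mem_box_self c hh)
  have := (hsub hxQ i).2
  simp only [hx, if_pos rfl] at this
  linarith [(hc i).1]

/-- `x^a * x^b = x` whenever `a + b = 1`, `a, b > 0`, in `ℝ≥0∞`. -/
lemma rpow_split (x : ℝ≥0∞) {a b : ℝ} (ha : 0 ≤ a) (hb : 0 ≤ b) (hab : a + b = 1) :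
    x = x ^ a * x ^ b := by
  rw [← ENNReal.rpow_add_of_nonneg a b ha hb, hab, ENNReal.rpow_one]

end Statement15Aux

namespace Statement15Aux

open MeasureTheory Set ENNReal

lemma counting {n : ℕ} {D S : Set (Set (Rn n))} (hD : IsDyadicSystem D) (hSD : S ⊆ D)
    {Qt : Set (Rn n)} (hQt : Qt ∈ D) :
    ∑' Q : {R : Set (Rn n) // R ∈ S ∧ Qt ⊆ R},
        (volume (Q : Set (Rn n)))⁻¹ * (volume (Q : Set (Rn n)))⁻¹
      ≤ 2 * ((volume Qt)⁻¹ * (volume Qt)⁻¹) := by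
  obtain ⟨k0, c0, hQtbox⟩ := hD.1 Qt hQt
  have h2k0 : (0:ℝ) < 2 ^ k0 := zpow_pos two_pos _
  have hQtbox' : Qt = box c0 ((2:ℝ) ^ k0) := hQtbox
  have hvolQt : volume Qt = ENNReal.ofReal ((2:ℝ) ^ k0) ^ n := by
    rw [hQtbox']; exact volume_box _ _
  set I := {R : Set (Rn n) // R ∈ S ∧ Qt ⊆ R}
  rcases Nat.eq_zero_or_pos n with hn | hn
  · -- n = 0 : every cube is `univ`
    subst hn
    have huniv : ∀ R ∈ D, R = (univ : Set (Rn 0)) := by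
      intro R hR
      obtain ⟨k, c, hbox⟩ := hD.1 R hR
      rw [hbox]
      exact eq_univ_of_forall fun x i => i.elim0
    haveI : Subsingleton I := ⟨fun a b => Subtype.ext (by
      rw [huniv a (hSD a.2.1), huniv b (hSD b.2.1)])⟩
    have hv : ∀ Q : I, volume (Q : Set (Rn 0)) = 1 := by
      intro Q
      obtain ⟨k, c, hbox⟩ := hD.1 Q (hSD Q.2.1)
      rw [show (Q : Set (Rn 0)) = box c ((2:ℝ)^k) from hbox, volume_box]
      simp
    have hvQt : volume Qt = 1 := by rw [hvolQt]; simp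
    rcases isEmpty_or_nonempty I with hI | hI
    · rw [tsum_empty]; exact zero_le
    · obtain ⟨q0⟩ := hI
      rw [tsum_eq_single q0 (fun b hb => absurd (Subsingleton.elim b q0) hb)]
      rw [hv q0, hvQt]
      simp
  · -- n ≥ 1
    have hD1 : ∀ Q : I, ∃ k : ℤ, HasSide (Q : Set (Rn n)) ((2:ℝ) ^ k) :=
      fun Q => hD.1 Q (hSD Q.2.1)
    set k : I → ℤ := fun Q => (hD1 Q).choose with hk
    have hkspec : ∀ Q : I, ∃ c, (Q : Set (Rn n)) = box c ((2:ℝ) ^ k Q) :=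
      fun Q => (hD1 Q).choose_spec
    have hc0Qt : c0 ∈ Qt := by rw [hQtbox']; exact mem_box_self _ h2k0
    have hk0le : ∀ Q : I, k0 ≤ k Q := by
      intro Q
      obtain ⟨c, hbox⟩ := hkspec Q
      have hsub : box c0 ((2:ℝ)^k0) ⊆ box c ((2:ℝ)^(k Q)) := by
        rw [← hQtbox', ← hbox]; exact Q.2.2
      have := box_side_le hn h2k0 (zpow_pos two_pos _) hsub
      exact (zpow_le_zpow_iff_right₀ (by norm_num : (1:ℝ) < 2)).1 this
    set ψ : I → ℕ := fun Q => (k Q - k0).toNat with hψ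
    have hψval : ∀ Q : I, (ψ Q : ℤ) = k Q - k0 := by
      intro Q
      exact Int.toNat_of_nonneg (by linarith [hk0le Q])
    have hinj : Function.Injective ψ := by
      intro Q Q' hQQ
      have hkk : k Q = k Q' := by
        have h1 := hψval Q; have h2 := hψval Q'
        rw [hQQ] at h1; omega
      obtain ⟨c, hbox⟩ := hkspec Q
      obtain ⟨c', hbox'⟩ := hkspec Q'
      rw [hkk] at hbox
      have hne : c0 ∈ (Q : Set (Rn n)) ∩ (Q' : Set (Rn n)) :=
        ⟨Q.2.2 hc0Qt, Q'.2.2 hc0Qt⟩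
      have htri := hD.2.1 Q (hSD Q.2.1) Q' (hSD Q'.2.1)
      have heq : (Q : Set (Rn n)) = (Q' : Set (Rn n)) := by
        rcases htri with h | h | h
        · -- Q ∩ Q' = Q, so Q ⊆ Q'
          have hsub : (Q : Set (Rn n)) ⊆ (Q' : Set (Rn n)) := by
            rw [← h]; exact inter_subset_right
          rw [hbox, hbox'] at hsub ⊢
          exact box_subset_eq (zpow_pos two_pos _) hsub
        · have hsub : (Q' : Set (Rn n)) ⊆ (Q : Set (Rn n)) := by
            rw [← h]; exact inter_subset_left
          rw [hbox, hbox'] at hsub ⊢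
          exact (box_subset_eq (zpow_pos two_pos _) hsub).symm
        · rw [h] at hne; exact absurd hne (notMem_empty _)
      exact Subtype.ext heq
    -- volume formula
    set b : ℝ≥0∞ := (2:ℝ≥0∞) ^ n with hb
    have hb0 : b ≠ 0 := by positivity
    have hbtop : b ≠ ∞ := by
      simp [hb]
    have hvQt0 : volume Qt ≠ 0 := by
      rw [hvolQt]
      exact pow_ne_zero _ (by simp [ENNReal.ofReal_eq_zero]; linarith)
    have hvQttop : volume Qt ≠ ∞ := by
      rw [hvolQt]
      exact pow_ne_top ENNReal.ofReal_ne_top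
    have hvol : ∀ Q : I, volume (Q : Set (Rn n)) = volume Qt * b ^ (ψ Q) := by
      intro Q
      obtain ⟨c, hbox⟩ := hkspec Q
      rw [show (Q : Set (Rn n)) = box c ((2:ℝ) ^ (k Q)) from hbox, volume_box]
      have hkQ : k Q = k0 + (ψ Q : ℤ) := by have := hψval Q; omega
      rw [hkQ, zpow_add₀ (two_ne_zero) k0 (ψ Q : ℤ), zpow_natCast,
        ENNReal.ofReal_mul (le_of_lt h2k0), mul_pow, hvolQt]
      congr 1
      rw [ENNReal.ofReal_pow (by norm_num : (0:ℝ) ≤ 2)]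
      rw [show ENNReal.ofReal 2 = (2:ℝ≥0∞) by norm_num]
      rw [hb, ← pow_mul, ← pow_mul, Nat.mul_comm]
    have hterm : ∀ Q : I,
        (volume (Q : Set (Rn n)))⁻¹ * (volume (Q : Set (Rn n)))⁻¹
          = ((volume Qt)⁻¹ * (volume Qt)⁻¹) * ((b⁻¹ * b⁻¹) ^ (ψ Q)) := by
      intro Q
      rw [hvol Q, ENNReal.mul_inv (Or.inl hvQt0) (Or.inl hvQttop), mul_pow,
        ENNReal.inv_pow]
      ring
    calc ∑' Q : I, (volume (Q : Set (Rn n)))⁻¹ * (volume (Q : Set (Rn n)))⁻¹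
        = ∑' Q : I, ((volume Qt)⁻¹ * (volume Qt)⁻¹) * ((b⁻¹ * b⁻¹) ^ (ψ Q)) := by
          exact tsum_congr hterm
      _ = ((volume Qt)⁻¹ * (volume Qt)⁻¹) * ∑' Q : I, (b⁻¹ * b⁻¹) ^ (ψ Q) :=
          ENNReal.tsum_mul_left
      _ ≤ ((volume Qt)⁻¹ * (volume Qt)⁻¹) * ∑' m : ℕ, (b⁻¹ * b⁻¹) ^ m := by
          gcongr
          exact tsum_comp_le_tsum_of_injective hinj _
      _ ≤ ((volume Qt)⁻¹ * (volume Qt)⁻¹) * 2 := by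
          gcongr
          rw [ENNReal.tsum_geometric]
          have hble : b⁻¹ * b⁻¹ ≤ 2⁻¹ := by
            have h1 : b⁻¹ ≤ 2⁻¹ := by
              apply ENNReal.inv_le_inv'
              calc (2:ℝ≥0∞) = 2 ^ 1 := (pow_one _).symm
                _ ≤ 2 ^ n := by
                    apply pow_le_pow_right' (by norm_num) hn
            have h2 : b⁻¹ ≤ 1 := by
              apply ENNReal.inv_le_one.2
              exact one_le_pow_of_one_le' (by norm_num : (1:ℝ≥0∞) ≤ 2) n
            calc b⁻¹ * b⁻¹ ≤ 2⁻¹ * 1 := mul_le_mul' h1 h2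
              _ = 2⁻¹ := mul_one _
          have : (1:ℝ≥0∞) - 2⁻¹ ≤ 1 - b⁻¹*b⁻¹ := tsub_le_tsub_left hble 1
          calc (1 - b⁻¹*b⁻¹)⁻¹ ≤ ((1:ℝ≥0∞) - 2⁻¹)⁻¹ := ENNReal.inv_le_inv' this
            _ = 2 := by
                rw [ENNReal.one_sub_inv_two]; exact inv_inv 2
      _ = 2 * ((volume Qt)⁻¹ * (volume Qt)⁻¹) := mul_comm _ _

end Statement15Aux

namespace Statement15Aux

open MeasureTheory Set ENNReal

lemma conj_pos {q : ℝ} (hq : 1 < q) : 0 < conj q :=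
  div_pos (by linarith) (by linarith)

lemma one_div_add_one_div_conj {q : ℝ} (hq : 1 < q) : 1 / q + 1 / conj q = 1 := by
  have hq0 : q ≠ 0 := by linarith
  have hq1 : q - 1 ≠ 0 := sub_ne_zero.2 (ne_of_gt hq)
  unfold conj
  rw [one_div_div]
  field_simp
  ring

end Statement15Aux

/-- Bound for the part of the sparse operator coming from cubes containing `Q̃`. -/
theorem statement15 {n : ℕ} (p p1 p2 : ℝ)
    (hp1 : 1 < p1) (hp2 : 1 < p2) (hp : 1 / p = 1 / p1 + 1 / p2) (hp0 : 1 < p) :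
    ∃ C : ℝ≥0∞, C ≠ ∞ ∧
      ∀ w1 w2 : Rn n → ℝ≥0∞, IsWeight w1 → IsWeight w2 →
        APconst p p1 p2 w1 w2 ≠ ∞ →
        ∀ D S : Set (Set (Rn n)), IsDyadicSystem D → S ⊆ D → IsSparse S →
          ∀ Qt ∈ D, ∀ f2 : Rn n → ℝ, Measurable f2 → Function.support f2 ⊆ Qt →
            lpNorm
                (Qt.indicator fun x =>
                  ∑' Q : {R : Set (Rn n) // R ∈ S ∧ Qt ⊆ R},
                    Set.indicator (Q : Set (Rn n))
                      (fun _ =>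
                        avg (Qt.indicator (dualW p1 w1)) Q *
                          avg (fun y => eAbs f2 y * dualW p2 w2 y) Q) x) p
                (vweight p p1 p2 w1 w2) ≤
              C * APconst p p1 p2 w1 w2 ^ (1 / p) *
                lpNorm (eAbs f2) p2 (dualW p2 w2) *
                mass (dualW p1 w1) Qt ^ (1 / p1) := by
  classical
  -- exponent arithmetic
  have hppos : 0 < p := by linarith
  have hpne : p ≠ 0 := ne_of_gt hppos
  have hp1pos : 0 < p1 := by linarith
  have hp2pos : 0 < p2 := by linarith
  have hcp1pos : 0 < conj p1 := Statement15Aux.conj_pos hp1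
  have hcp2pos : 0 < conj p2 := Statement15Aux.conj_pos hp2
  have hcp1ne : conj p1 ≠ 0 := ne_of_gt hcp1pos
  have hcp2ne : conj p2 ≠ 0 := ne_of_gt hcp2pos
  have hs1 : 1 / p1 + 1 / conj p1 = 1 := Statement15Aux.one_div_add_one_div_conj hp1
  have hs2 : 1 / p2 + 1 / conj p2 = 1 := Statement15Aux.one_div_add_one_div_conj hp2
  have hsum3 : 1 / p + 1 / conj p1 + 1 / conj p2 = 2 := by
    have h1 : 1 / conj p1 = 1 - 1 / p1 := by linarith
    have h2 : 1 / conj p2 = 1 - 1 / p2 := by linarith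
    rw [h1, h2, hp]; ring
  have he1 : (p / conj p1) * (1 / p) = 1 / conj p1 := by
    field_simp
  have he2 : (p / conj p2) * (1 / p) = 1 / conj p2 := by
    field_simp
  refine ⟨2, by norm_num, ?_⟩
  intro w1 w2 hw1 hw2 hAP D S hD hSD _hSp Qt hQtD f2 hf2m hsupp
  set σ1 := dualW p1 w1 with hσ1def
  set σ2 := dualW p2 w2 with hσ2def
  set v := vweight p p1 p2 w1 w2 with hvdef
  have hσ1m : Measurable σ1 := hw1.1.pow_const _
  have hσ2m : Measurable σ2 := hw2.1.pow_const _
  have hvm : Measurable v := (hw1.1.pow_const _).mul (hw2.1.pow_const _)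
  have habs : Measurable (eAbs f2) := hf2m.nnnorm.coe_nnreal_ennreal
  have hfσ2m : Measurable (fun y => eAbs f2 y * σ2 y) := habs.mul hσ2m
  -- cube structure of Qt
  obtain ⟨k0, c0, hQtbox⟩ := hD.1 Qt hQtD
  have h2k0 : (0:ℝ) < 2 ^ k0 := zpow_pos two_pos _
  have hQtbox' : Qt = Statement15Aux.box c0 ((2:ℝ) ^ k0) := hQtbox
  have hQtcube : IsCube Qt := ⟨_, h2k0, c0, hQtbox⟩
  have hQtmeas : MeasurableSet Qt := by
    rw [hQtbox']; exact Statement15Aux.measurableSet_box _ _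
  set V := volume Qt with hVdef
  have hvolQt : V = ENNReal.ofReal ((2:ℝ) ^ k0) ^ n := by
    rw [hVdef, hQtbox']; exact Statement15Aux.volume_box _ _
  have hV0 : V ≠ 0 := by
    rw [hvolQt]
    exact pow_ne_zero _ (by simp [ENNReal.ofReal_eq_zero]; linarith)
  have hVtop : V ≠ ∞ := by
    rw [hvolQt]
    exact pow_ne_top ENNReal.ofReal_ne_top
  set I := {R : Set (Rn n) // R ∈ S ∧ Qt ⊆ R} with hIdef
  set c := ∑' Q : I,
      avg (Qt.indicator σ1) (Q : Set (Rn n)) *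
        avg (fun y => eAbs f2 y * σ2 y) (Q : Set (Rn n)) with hcdef
  -- Step 1 : the function is a constant multiple of the indicator of Qt
  have hfun : (Qt.indicator fun x =>
      ∑' Q : I, Set.indicator (Q : Set (Rn n))
        (fun _ => avg (Qt.indicator σ1) (Q : Set (Rn n)) *
          avg (fun y => eAbs f2 y * σ2 y) (Q : Set (Rn n))) x)
      = Qt.indicator (fun _ => c) := by
    apply Set.indicator_congr
    intro x hx
    exact tsum_congr fun Q => Set.indicator_of_mem (Q.2.2 hx) _
  -- Step 2 : the norm of the constant multiple
  have hnorm : lpNorm (Qt.indicator (fun _ => c)) p v = c * (mass v Qt) ^ (1 / p) := by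
    unfold _root_.lpNorm
    have hptw : (fun x => (Qt.indicator (fun _ => c) x) ^ p * v x)
        = Qt.indicator (fun x => c ^ p * v x) := by
      funext x
      by_cases hx : x ∈ Qt
      · simp [Set.indicator_of_mem hx]
      · simp [Set.indicator_of_notMem hx, ENNReal.zero_rpow_of_pos hppos]
    rw [hptw, lintegral_indicator hQtmeas, lintegral_const_mul _ hvm,
      ENNReal.mul_rpow_of_nonneg _ _ (by positivity : (0:ℝ) ≤ 1 / p),
      ← ENNReal.rpow_mul, mul_one_div, div_self hpne, ENNReal.rpow_one]
    rfl
  -- Step 3 : bound on c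
  have hmass1 : ∀ Q : I, mass (Qt.indicator σ1) (Q : Set (Rn n)) ≤ mass σ1 Qt := by
    intro Q
    calc mass (Qt.indicator σ1) (Q : Set (Rn n)) ≤ ∫⁻ x, Qt.indicator σ1 x :=
          setLIntegral_le_lintegral _ _
      _ = ∫⁻ x in Qt, σ1 x := lintegral_indicator hQtmeas _
  set A := mass (fun y => eAbs f2 y * σ2 y) Qt with hAdef
  have hptwise : ∀ x, eAbs f2 x * σ2 x ≤ Qt.indicator (fun y => eAbs f2 y * σ2 y) x := by
    intro x
    by_cases hx : x ∈ Qt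
    · rw [Set.indicator_of_mem hx]
    · rw [Set.indicator_of_notMem hx]
      have hf0 : f2 x = 0 := by
        by_contra h0
        exact hx (hsupp h0)
      simp [eAbs, hf0]
  have hmass2 : ∀ Q : I, mass (fun y => eAbs f2 y * σ2 y) (Q : Set (Rn n)) ≤ A := by
    intro Q
    calc mass (fun y => eAbs f2 y * σ2 y) (Q : Set (Rn n))
        ≤ ∫⁻ x in (Q : Set (Rn n)), Qt.indicator (fun y => eAbs f2 y * σ2 y) x :=
          lintegral_mono hptwise
      _ ≤ ∫⁻ x, Qt.indicator (fun y => eAbs f2 y * σ2 y) x := setLIntegral_le_lintegral _ _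
      _ = ∫⁻ x in Qt, eAbs f2 x * σ2 x := lintegral_indicator hQtmeas _
  have hterm : ∀ Q : I,
      avg (Qt.indicator σ1) (Q : Set (Rn n)) * avg (fun y => eAbs f2 y * σ2 y) (Q : Set (Rn n))
        ≤ (mass σ1 Qt * A) *
            ((volume (Q : Set (Rn n)))⁻¹ * (volume (Q : Set (Rn n)))⁻¹) := by
    intro Q
    simp only [avg, div_eq_mul_inv]
    calc mass (Qt.indicator σ1) (Q : Set (Rn n)) * (volume (Q : Set (Rn n)))⁻¹ *
          (mass (fun y => eAbs f2 y * σ2 y) (Q : Set (Rn n)) * (volume (Q : Set (Rn n)))⁻¹)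
        = (mass (Qt.indicator σ1) (Q : Set (Rn n)) *
            mass (fun y => eAbs f2 y * σ2 y) (Q : Set (Rn n))) *
            ((volume (Q : Set (Rn n)))⁻¹ * (volume (Q : Set (Rn n)))⁻¹) := by ring
      _ ≤ _ := by
          apply mul_le_mul_left
          exact mul_le_mul' (hmass1 Q) (hmass2 Q)
  have hc : c ≤ (mass σ1 Qt * A) * (2 * (V⁻¹ * V⁻¹)) := by
    calc c ≤ ∑' Q : I, (mass σ1 Qt * A) *
            ((volume (Q : Set (Rn n)))⁻¹ * (volume (Q : Set (Rn n)))⁻¹) :=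
          ENNReal.tsum_le_tsum hterm
      _ = (mass σ1 Qt * A) *
            ∑' Q : I, (volume (Q : Set (Rn n)))⁻¹ * (volume (Q : Set (Rn n)))⁻¹ :=
          ENNReal.tsum_mul_left
      _ ≤ _ := by
          apply mul_le_mul_right
          exact Statement15Aux.counting hD hSD hQtD
  -- Step 4 : Hölder's inequality for A
  set N2 := lpNorm (eAbs f2) p2 σ2 with hN2def
  have hA : A ≤ N2 * (mass σ2 Qt) ^ (1 / conj p2) := by
    have hconj2 : Real.HolderConjugate p2 (conj p2) := by
      rw [Real.holderConjugate_iff]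
      constructor
      · exact hp2
      · rw [← one_div, ← one_div]; exact hs2
    have hH := ENNReal.lintegral_mul_le_Lp_mul_Lq (volume.restrict Qt) hconj2
      ((habs.mul (hσ2m.pow_const _)).aemeasurable :
        AEMeasurable (fun x => eAbs f2 x * σ2 x ^ (1/p2)) (volume.restrict Qt))
      ((hσ2m.pow_const _).aemeasurable :
        AEMeasurable (fun x => σ2 x ^ (1/conj p2)) (volume.restrict Qt))
    have hfg : ∀ x, (fun x => eAbs f2 x * σ2 x ^ (1/p2)) x * (fun x => σ2 x ^ (1/conj p2)) x
        = eAbs f2 x * σ2 x := by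
      intro x
      simp only []
      rw [mul_assoc]
      congr 1
      exact (Statement15Aux.rpow_split (σ2 x) (by positivity) (by positivity) hs2).symm
    have hAeq : A = ∫⁻ x in Qt,
        ((fun x => eAbs f2 x * σ2 x ^ (1/p2)) * fun x => σ2 x ^ (1/conj p2)) x := by
      rw [hAdef]
      apply lintegral_congr
      intro x
      exact (hfg x).symm
    have hF : ∀ x, (eAbs f2 x * σ2 x ^ (1/p2)) ^ p2 = eAbs f2 x ^ p2 * σ2 x := by
      intro x
      rw [ENNReal.mul_rpow_of_nonneg _ _ (le_of_lt hp2pos), ← ENNReal.rpow_mul,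
        one_div, inv_mul_cancel₀ (ne_of_gt hp2pos), ENNReal.rpow_one]
    have hG : ∀ x, (σ2 x ^ (1/conj p2)) ^ (conj p2) = σ2 x := by
      intro x
      rw [← ENNReal.rpow_mul, one_div, inv_mul_cancel₀ hcp2ne, ENNReal.rpow_one]
    rw [hAeq]
    refine le_trans hH ?_
    apply mul_le_mul'
    · -- first factor ≤ N2
      have : (∫⁻ x in Qt, (eAbs f2 * fun x => σ2 x ^ (1/p2)) x ^ p2)
          = ∫⁻ x in Qt, eAbs f2 x ^ p2 * σ2 x := lintegral_congr fun x => hF x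
      rw [this]
      rw [hN2def]
      unfold _root_.lpNorm
      apply ENNReal.rpow_le_rpow _ (by positivity)
      exact setLIntegral_le_lintegral _ _
    · -- second factor
      have : (∫⁻ x in Qt, (σ2 x ^ (1/conj p2)) ^ (conj p2)) = mass σ2 Qt :=
        lintegral_congr fun x => hG x
      rw [this]
  -- Step 5 : the A_P constant bound at Qt
  have hAPQt : avg v Qt * avg σ1 Qt ^ (p / conj p1) * avg σ2 Qt ^ (p / conj p2)
      ≤ APconst p p1 p2 w1 w2 := by
    unfold APconst
    rw [← hσ1def, ← hσ2def, ← hvdef]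
    exact le_iSup₂ (f := fun (Q : Set (Rn n)) (_ : IsCube Q) =>
      avg v Q * avg σ1 Q ^ (p / conj p1) * avg σ2 Q ^ (p / conj p2)) Qt hQtcube
  -- Step 6 : mass-product bound
  have hmassavg : ∀ g : Rn n → ℝ≥0∞, mass g Qt = avg g Qt * V := by
    intro g
    exact (ENNReal.div_mul_cancel hV0 hVtop).symm
  have hT : (mass v Qt) ^ (1/p) * ((mass σ1 Qt) ^ (1/conj p1) * (mass σ2 Qt) ^ (1/conj p2))
      ≤ (APconst p p1 p2 w1 w2) ^ (1/p) * (V * V) := by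
    have hVpow : V ^ ((1:ℝ)/p) * (V ^ ((1:ℝ)/conj p1) * V ^ ((1:ℝ)/conj p2)) = V * V := by
      rw [← ENNReal.rpow_add _ _ hV0 hVtop, ← ENNReal.rpow_add _ _ hV0 hVtop]
      rw [show 1/p + (1/conj p1 + 1/conj p2) = ((2:ℕ):ℝ) by push_cast; linarith]
      rw [ENNReal.rpow_natCast, pow_two]
    calc (mass v Qt) ^ (1/p) * ((mass σ1 Qt) ^ (1/conj p1) * (mass σ2 Qt) ^ (1/conj p2))
        = (avg v Qt ^ (1/p) * (avg σ1 Qt ^ (1/conj p1) * avg σ2 Qt ^ (1/conj p2))) *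
            (V ^ ((1:ℝ)/p) * (V ^ ((1:ℝ)/conj p1) * V ^ ((1:ℝ)/conj p2))) := by
          rw [hmassavg v, hmassavg σ1, hmassavg σ2,
            ENNReal.mul_rpow_of_nonneg _ _ (by positivity : (0:ℝ) ≤ 1/p),
            ENNReal.mul_rpow_of_nonneg _ _ (by positivity : (0:ℝ) ≤ 1/conj p1),
            ENNReal.mul_rpow_of_nonneg _ _ (by positivity : (0:ℝ) ≤ 1/conj p2)]
          ring
      _ = ((avg v Qt * avg σ1 Qt ^ (p/conj p1) * avg σ2 Qt ^ (p/conj p2)) ^ ((1:ℝ)/p)) *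
            (V ^ ((1:ℝ)/p) * (V ^ ((1:ℝ)/conj p1) * V ^ ((1:ℝ)/conj p2))) := by
          congr 1
          rw [ENNReal.mul_rpow_of_nonneg _ _ (by positivity : (0:ℝ) ≤ 1/p),
            ENNReal.mul_rpow_of_nonneg _ _ (by positivity : (0:ℝ) ≤ 1/p),
            ← ENNReal.rpow_mul (avg σ1 Qt), ← ENNReal.rpow_mul (avg σ2 Qt), he1, he2]
          ring
      _ ≤ (APconst p p1 p2 w1 w2) ^ ((1:ℝ)/p) *
            (V ^ ((1:ℝ)/p) * (V ^ ((1:ℝ)/conj p1) * V ^ ((1:ℝ)/conj p2))) := by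
          apply mul_le_mul_left
          exact ENNReal.rpow_le_rpow hAPQt (by positivity)
      _ = (APconst p p1 p2 w1 w2) ^ (1/p) * (V * V) := by rw [hVpow]
  -- Final assembly
  rw [hfun, hnorm]
  have hsplit1 : mass σ1 Qt = (mass σ1 Qt) ^ (1/p1) * (mass σ1 Qt) ^ (1/conj p1) :=
    Statement15Aux.rpow_split _ (by positivity) (by positivity) hs1
  calc c * (mass v Qt) ^ (1/p)
      ≤ ((mass σ1 Qt * A) * (2 * (V⁻¹ * V⁻¹))) * (mass v Qt) ^ (1/p) :=
        mul_le_mul_left hc _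
    _ ≤ ((((mass σ1 Qt) ^ (1/p1) * (mass σ1 Qt) ^ (1/conj p1)) *
          (N2 * (mass σ2 Qt) ^ (1/conj p2))) * (2 * (V⁻¹ * V⁻¹))) * (mass v Qt) ^ (1/p) := by
        apply mul_le_mul_left
        apply mul_le_mul_left
        exact mul_le_mul' (le_of_eq hsplit1) hA
    _ = (2 * (mass σ1 Qt) ^ (1/p1) * N2) *
          (((mass v Qt) ^ (1/p) * ((mass σ1 Qt) ^ (1/conj p1) * (mass σ2 Qt) ^ (1/conj p2))) *
            (V⁻¹ * V⁻¹)) := by ring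
    _ ≤ (2 * (mass σ1 Qt) ^ (1/p1) * N2) *
          (((APconst p p1 p2 w1 w2) ^ (1/p) * (V * V)) * (V⁻¹ * V⁻¹)) := by
        apply mul_le_mul_right
        exact mul_le_mul_left hT _
    _ = (2 * (APconst p p1 p2 w1 w2) ^ (1/p) * N2 * (mass σ1 Qt) ^ (1/p1)) *
          ((V * V⁻¹) * (V * V⁻¹)) := by ring
    _ = 2 * (APconst p p1 p2 w1 w2) ^ (1/p) * N2 * (mass σ1 Qt) ^ (1/p1) := by
        rw [ENNReal.mul_inv_cancel hV0 hVtop]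
        ring
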